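/- Closedness of Chern forms: if θ is a matrix of 1-forms and Θ = dθ + θ∧θ, then every homogeneous component of det(1 + c·Θ) is a closed form, for any scalar c ∈ ℂ. -/

import Mathlib

/-- Determinant (via the Leibniz formula with a fixed ordering of the factors)
of a square matrix over a possibly noncommutative ring; for matrices of even
differential forms, whose entries commute, this is "the" determinant. -/
def ndet {n : ℕ} {Ω : Type*} [Ring Ω] (M : Matrix (Fin n) (Fin n) Ω) : Ω :=
  ∑ σ : Equiv.Perm (Fin n),
    ((Equiv.Perm.sign σ : ℤ)) • (List.ofFn fun i => M (σ i) i).prod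

namespace ChernAux

open Matrix Finset DirectSum

set_option linter.unusedSectionVars false
set_option maxHeartbeats 1000000
set_option synthInstance.maxHeartbeats 200000

variable {Ω : Type*} [Ring Ω] [Algebra ℂ Ω] {n : ℕ}

/-- "Even" elements: central, and satisfying the unsigned Leibniz rule. -/
def Pev (d : Ω →ₗ[ℂ] Ω) (a : Ω) : Prop :=
  (∀ b, a * b = b * a) ∧ (∀ b, d (a * b) = d a * b + a * d b)

variable {d : Ω →ₗ[ℂ] Ω}

lemma Pev.central {a : Ω} (h : Pev d a) (b : Ω) : a * b = b * a := h.1 b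
lemma Pev.leib {a : Ω} (h : Pev d a) (b : Ω) : d (a * b) = d a * b + a * d b := h.2 b

lemma Pev.zero : Pev d 0 := ⟨by simp, by simp⟩

lemma Pev.one (hone : d 1 = 0) : Pev d 1 := ⟨by simp, by simp [hone]⟩

lemma Pev.add {a a' : Ω} (h : Pev d a) (h' : Pev d a') : Pev d (a + a') := by
  refine ⟨fun b => ?_, fun b => ?_⟩
  · rw [add_mul, mul_add, h.1, h'.1]
  · simp only [add_mul, map_add, h.2, h'.2]
    abel

lemma Pev.smul (c : ℂ) {a : Ω} (h : Pev d a) : Pev d (c • a) := by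
  refine ⟨fun b => ?_, fun b => ?_⟩
  · rw [smul_mul_assoc, mul_smul_comm, h.1]
  · simp only [smul_mul_assoc, _root_.map_smul, smul_add, h.2, mul_smul_comm]

lemma Pev.mul {a a' : Ω} (h : Pev d a) (h' : Pev d a') : Pev d (a * a') := by
  refine ⟨fun b => ?_, fun b => ?_⟩
  · rw [mul_assoc, h'.1, ← mul_assoc, h.1, mul_assoc]
  · have e1 : d (a * a' * b) = d a * (a' * b) + a * (d a' * b + a' * d b) := by
      rw [mul_assoc, h.2 (a' * b), h'.2 b]
    have e2 : d (a * a') = d a * a' + a * d a' := h.2 a'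
    rw [e1, e2]
    noncomm_ring

section Graded

variable (𝒜 : ℕ → Submodule ℂ Ω) [GradedRing 𝒜] (d : Ω →ₗ[ℂ] Ω)

lemma d_one (hLeib : ∀ (m : ℕ) (a b : Ω), a ∈ 𝒜 m →
      d (a * b) = d a * b + ((-1 : ℤ) ^ m) • (a * d b)) : d 1 = 0 := by
  have h := hLeib 0 1 1 (SetLike.one_mem_graded 𝒜)
  simp only [mul_one, one_mul, pow_zero, one_smul] at h
  have h2 : d 1 + d 1 = d 1 := h.symm
  simpa using add_eq_left.mp h2

lemma central_of_even
    (hcomm : ∀ (m k : ℕ) (a b : Ω), a ∈ 𝒜 m → b ∈ 𝒜 k →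
      a * b = ((-1 : ℤ) ^ (m * k)) • (b * a))
    {m : ℕ} (hm : Even m) {a : Ω} (ha : a ∈ 𝒜 m) (b : Ω) : a * b = b * a := by
  induction b using DirectSum.Decomposition.inductionOn 𝒜 with
  | zero => simp
  | homogeneous x =>
      rename_i i
      rw [hcomm m i a x ha x.2, (hm.mul_right i).neg_one_pow, one_smul]
  | add b b' hb hb' => rw [mul_add, add_mul, hb, hb']

lemma pev_of_even
    (hLeib : ∀ (m : ℕ) (a b : Ω), a ∈ 𝒜 m →
      d (a * b) = d a * b + ((-1 : ℤ) ^ m) • (a * d b))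
    (hcomm : ∀ (m k : ℕ) (a b : Ω), a ∈ 𝒜 m → b ∈ 𝒜 k →
      a * b = ((-1 : ℤ) ^ (m * k)) • (b * a))
    {m : ℕ} (hm : Even m) {a : Ω} (ha : a ∈ 𝒜 m) : Pev d a := by
  refine ⟨central_of_even 𝒜 hcomm hm ha, fun b => ?_⟩
  rw [hLeib m a b ha, hm.neg_one_pow, one_smul]



end Graded

variable {d : Ω →ₗ[ℂ] Ω}

lemma pev_prod (hone : d 1 = 0) (f : Fin n → Subring.center Ω)
    (hf : ∀ i, Pev d ((f i : Ω))) (s : Finset (Fin n)) :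
    Pev d ((∏ i ∈ s, f i : Subring.center Ω) : Ω) := by
  classical
  induction s using Finset.induction_on with
  | empty => simpa using Pev.one hone
  | insert a s ha ih =>
      rw [Finset.prod_insert ha]
      exact Pev.mul (hf a) ih

lemma d_prod (hone : d 1 = 0) (f : Fin n → Subring.center Ω)
    (hf : ∀ i, Pev d ((f i : Ω))) (s : Finset (Fin n)) :
    d ((∏ i ∈ s, f i : Subring.center Ω) : Ω) =
      ∑ p ∈ s, ((∏ i ∈ s.erase p, f i : Subring.center Ω) : Ω) * d ((f p : Ω)) := by
  classical
  induction s using Finset.induction_on with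
  | empty => simpa using hone
  | insert a s ha ih =>
      rw [Finset.prod_insert ha, Finset.sum_insert ha, Finset.erase_insert ha]
      have hco : ((f a * ∏ i ∈ s, f i : Subring.center Ω) : Ω)
          = (f a : Ω) * ((∏ i ∈ s, f i : Subring.center Ω) : Ω) := rfl
      rw [hco, (hf a).2, ih]
      have hcen := (pev_prod hone f hf s).1 (d (f a : Ω))
      rw [← hcen, Finset.mul_sum]
      congr 1
      refine Finset.sum_congr rfl fun p hp => ?_
      have hap : a ≠ p := fun h => ha (h ▸ hp)
      rw [Finset.erase_insert_of_ne hap,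
        Finset.prod_insert (fun h => ha (Finset.mem_of_mem_erase h))]
      have : ((f a * ∏ i ∈ s.erase p, f i : Subring.center Ω) : Ω)
          = (f a : Ω) * ((∏ i ∈ s.erase p, f i : Subring.center Ω) : Ω) := rfl
      rw [this, mul_assoc]

lemma det_updateCol_expand (A : Matrix (Fin n) (Fin n) (Subring.center Ω)) (p : Fin n)
    (v : Fin n → Subring.center Ω) :
    (A.updateCol p v).det =
      ∑ σ : Equiv.Perm (Fin n), Equiv.Perm.sign σ •
        (v (σ p) * ∏ i ∈ Finset.univ.erase p, A (σ i) i) := by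
  rw [Matrix.det_apply]
  refine Finset.sum_congr rfl fun σ _ => ?_
  congr 1
  rw [← Finset.mul_prod_erase Finset.univ _ (Finset.mem_univ p)]
  congr 1
  · simp [Matrix.updateCol_apply]
  · exact Finset.prod_congr rfl fun i hi => by
      simp [Matrix.updateCol_apply, Finset.ne_of_mem_erase hi]


lemma coe_zsmul (k : ℤ) (x : Subring.center Ω) :
    (((k • x : Subring.center Ω)) : Ω) = k • (x : Ω) :=
  map_zsmul (Subring.center Ω).subtype k x

lemma coe_units_zsmul (u : ℤˣ) (x : Subring.center Ω) :
    ((u • x : Subring.center Ω) : Ω) = (u : ℤ) • (x : Ω) := by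
  rw [Units.smul_def, coe_zsmul]

lemma ndet_eq (A : Matrix (Fin n) (Fin n) (Subring.center Ω))
    (M : Matrix (Fin n) (Fin n) Ω) (hM : ∀ i j, M i j = (A i j : Ω)) :
    ndet M = (A.det : Ω) := by
  rw [ndet, Matrix.det_apply, AddSubmonoidClass.coe_finset_sum]
  refine Finset.sum_congr rfl fun σ _ => ?_
  rw [coe_units_zsmul]
  congr 1
  have h1 : ((∏ i, A (σ i) i : Subring.center Ω) : Ω)
      = ((List.ofFn fun i => A (σ i) i).prod : Subring.center Ω) := by
    rw [List.prod_ofFn]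
  rw [h1]
  have h2 := map_list_prod ((Subring.center Ω).subtype) (List.ofFn fun i => A (σ i) i)
  simp only [Subring.coe_subtype] at h2
  rw [h2, List.map_ofFn]
  have h3 : (fun i => M (σ i) i) = (Subtype.val ∘ fun i => A (σ i) i) := by
    funext i; simp [hM]
  rw [h3]


/-- Lemma D: replace a permutation sum by a sum over `r` of minors. -/
lemma sum_perm_eq (A : Matrix (Fin n) (Fin n) (Subring.center Ω)) (p : Fin n)
    (w : Fin n → Ω) :
    ∑ σ : Equiv.Perm (Fin n), (Equiv.Perm.sign σ : ℤ) •
        (((∏ i ∈ Finset.univ.erase p, A (σ i) i : Subring.center Ω) : Ω) * w (σ p)) =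
      ∑ r : Fin n, (((A.updateCol p (Pi.single r 1)).det : Subring.center Ω) : Ω) * w r := by
  classical
  have h1 : ∀ r : Fin n, (((A.updateCol p (Pi.single r 1)).det : Subring.center Ω) : Ω)
      = ∑ σ : Equiv.Perm (Fin n), (Equiv.Perm.sign σ : ℤ) •
          ((if σ p = r then (1:Ω) else 0) *
            ((∏ i ∈ Finset.univ.erase p, A (σ i) i : Subring.center Ω) : Ω)) := by
    intro r
    rw [det_updateCol_expand, AddSubmonoidClass.coe_finset_sum]
    refine Finset.sum_congr rfl fun σ _ => ?_
    rw [coe_units_zsmul]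
    congr 1
    rw [MulMemClass.coe_mul]
    congr 1
    rw [Pi.single_apply]
    split_ifs <;> simp
  simp_rw [h1, Finset.sum_mul]
  rw [Finset.sum_comm]
  refine Finset.sum_congr rfl fun σ _ => ?_
  rw [Finset.sum_eq_single (σ p)]
  · simp [mul_assoc]
  · intro r _ hr
    rw [if_neg (fun h => hr h.symm)]
    simp
  · intro h; exact absurd (Finset.mem_univ _) h


lemma d_det_zero (hone : d 1 = 0) (A : Matrix (Fin n) (Fin n) (Subring.center Ω))
    (hA : ∀ i j, Pev d ((A i j : Ω))) (θ : Matrix (Fin n) (Fin n) Ω)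
    (hT : ∀ i j, d ((A i j : Ω)) = ∑ q, ((A i q : Ω) * θ q j - θ i q * (A q j : Ω))) :
    d ((A.det : Subring.center Ω) : Ω) = 0 := by
  classical
  set C : Fin n → Fin n → Subring.center Ω :=
    fun p r => (A.updateCol p (Pi.single r 1)).det with hC
  -- Step 1: d det = ∑_p ∑_r ↑(C p r) * d ↑(A r p)
  have hdet : ((A.det : Subring.center Ω) : Ω) = ∑ σ : Equiv.Perm (Fin n),
      (Equiv.Perm.sign σ : ℤ) • ((∏ i, A (σ i) i : Subring.center Ω) : Ω) := by
    rw [Matrix.det_apply, AddSubmonoidClass.coe_finset_sum]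
    exact Finset.sum_congr rfl fun σ _ => coe_units_zsmul _ _
  have step1 : d ((A.det : Subring.center Ω) : Ω)
      = ∑ p : Fin n, ∑ r : Fin n, ((C p r : Ω)) * d ((A r p : Ω)) := by
    rw [hdet, map_sum]
    simp_rw [map_zsmul]
    have hp : ∀ σ : Equiv.Perm (Fin n), d ((∏ i, A (σ i) i : Subring.center Ω) : Ω)
        = ∑ p : Fin n, ((∏ i ∈ Finset.univ.erase p, A (σ i) i : Subring.center Ω) : Ω)
            * d ((A (σ p) p : Ω)) := fun σ =>
      d_prod hone (fun i => A (σ i) i) (fun i => hA _ _) Finset.univ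
    simp_rw [hp, Finset.smul_sum]
    rw [Finset.sum_comm]
    refine Finset.sum_congr rfl fun p _ => ?_
    exact sum_perm_eq A p (fun r => d ((A r p : Ω)))
  -- the two contraction identities
  have claim1 : ∀ p q : Fin n,
      (∑ r, C p r * A r q) = (Pi.single q A.det : Fin n → Subring.center Ω) p := by
    intro p q
    set L : (Fin n → Subring.center Ω) →ₗ[Subring.center Ω] Subring.center Ω :=
      (LinearMap.proj p).comp (Matrix.cramer A) with hL
    have h0 : ∀ r, C p r * A r q
        = A r q • L (Pi.single r (1 : Subring.center Ω)) := by
      intro r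
      simp only [hL, LinearMap.comp_apply, LinearMap.proj_apply, smul_eq_mul]
      rw [mul_comm]
      rfl
    simp_rw [h0, ← L.map_smul]
    rw [← map_sum]
    have h2 : (∑ r, A r q • (Pi.single r (1 : Subring.center Ω) : Fin n → Subring.center Ω))
        = fun j => A j q := by
      funext j
      rw [Finset.sum_apply]
      simp [Pi.single_apply]
    rw [h2]
    simp only [hL, LinearMap.comp_apply, LinearMap.proj_apply]
    rw [Matrix.cramer_row_self A (fun j => A j q) q (fun j => rfl)]
  have claim2 : ∀ q r : Fin n,
      (∑ p, A q p * C p r) = (Pi.single r A.det : Fin n → Subring.center Ω) q := by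
    intro q r
    have h0 := congrFun (Matrix.mulVec_cramer A (Pi.single r (1 : Subring.center Ω))) q
    have h1 : (A *ᵥ Matrix.cramer A (Pi.single r 1)) q = ∑ p, A q p * C p r := by
      simp [Matrix.mulVec, dotProduct]
      rfl
    rw [h1] at h0
    rw [h0]
    simp [Pi.single_apply, mul_comm]
  -- centrality helpers
  have hcen : ∀ (x : Subring.center Ω) (g : Ω), (x : Ω) * g = g * (x : Ω) :=
    fun x g => (Subring.mem_center_iff.mp x.2 g).symm
  -- substitute hT and massage
  rw [step1]
  simp_rw [hT]
  have massage : ∀ p r, ((C p r : Ω)) * (∑ q, ((A r q : Ω) * θ q p - θ r q * (A q p : Ω)))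
      = (∑ q, ((C p r * A r q : Subring.center Ω) : Ω) * θ q p)
        - ∑ q, θ r q * ((A q p * C p r : Subring.center Ω) : Ω) := by
    intro p r
    rw [Finset.mul_sum]
    simp_rw [mul_sub]
    rw [Finset.sum_sub_distrib]
    congr 1
    · refine Finset.sum_congr rfl fun q _ => ?_
      rw [← mul_assoc, ← MulMemClass.coe_mul]
    · refine Finset.sum_congr rfl fun q _ => ?_
      rw [hcen (C p r) (θ r q * (A q p : Ω)), mul_assoc, ← MulMemClass.coe_mul]
  simp_rw [massage, Finset.sum_sub_distrib]
  have final1 : ∀ p : Fin n, (∑ r, ∑ q, ((C p r * A r q : Subring.center Ω) : Ω) * θ q p)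
      = ((A.det : Subring.center Ω) : Ω) * θ p p := by
    intro p
    rw [Finset.sum_comm]
    have h1 : ∀ q, (∑ r, ((C p r * A r q : Subring.center Ω) : Ω) * θ q p)
        = (((Pi.single q A.det : Fin n → Subring.center Ω) p : Ω)) * θ q p := by
      intro q
      rw [← Finset.sum_mul, ← AddSubmonoidClass.coe_finset_sum, claim1]
    simp_rw [h1]
    rw [Finset.sum_eq_single p]
    · rw [Pi.single_eq_same]
    · intro q _ hq
      rw [Pi.single_eq_of_ne (Ne.symm hq)]
      simp
    · intro h; exact absurd (Finset.mem_univ _) h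
  have final2 : (∑ p : Fin n, ∑ r : Fin n, ∑ q : Fin n,
        θ r q * ((A q p * C p r : Subring.center Ω) : Ω))
      = ∑ p : Fin n, ((A.det : Subring.center Ω) : Ω) * θ p p := by
    rw [Finset.sum_comm]
    have h1 : ∀ r, (∑ p, ∑ q, θ r q * ((A q p * C p r : Subring.center Ω) : Ω))
        = ∑ q, θ r q * (((Pi.single r A.det : Fin n → Subring.center Ω) q : Ω)) := by
      intro r
      rw [Finset.sum_comm]
      refine Finset.sum_congr rfl fun q _ => ?_
      rw [← Finset.mul_sum, ← AddSubmonoidClass.coe_finset_sum, claim2]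
    simp_rw [h1]
    have h2 : ∀ r, (∑ q, θ r q * (((Pi.single r A.det : Fin n → Subring.center Ω) q : Ω)))
        = ((A.det : Subring.center Ω) : Ω) * θ r r := by
      intro r
      rw [Finset.sum_eq_single r]
      · rw [Pi.single_eq_same, ← hcen]
      · intro q _ hq
        rw [Pi.single_eq_of_ne hq]
        simp
      · intro h; exact absurd (Finset.mem_univ _) h
    simp_rw [h2]
  simp_rw [final1]
  rw [final2, sub_self]


lemma d_decompose_zero (𝒜 : ℕ → Submodule ℂ Ω) [GradedRing 𝒜] (d : Ω →ₗ[ℂ] Ω)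
    (hdeg : ∀ (m : ℕ) (a : Ω), a ∈ 𝒜 m → d a ∈ 𝒜 (m + 1)) {x : Ω}
    (hx : d x = 0) (k : ℕ) :
    d ((DirectSum.decompose 𝒜 x k : 𝒜 k) : Ω) = 0 := by
  classical
  by_cases hk : k ∈ (DirectSum.decompose 𝒜 x).support
  · have hs := DirectSum.sum_support_decompose 𝒜 x
    have h0 : (∑ j ∈ (DirectSum.decompose 𝒜 x).support,
        d ((DirectSum.decompose 𝒜 x j : 𝒜 j) : Ω)) = 0 := by
      rw [← map_sum, hs, hx]
    have h1 : ((DirectSum.decompose 𝒜 (∑ j ∈ (DirectSum.decompose 𝒜 x).support,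
        d ((DirectSum.decompose 𝒜 x j : 𝒜 j) : Ω)) (k+1) : 𝒜 (k+1)) : Ω) = 0 := by
      rw [h0]; simp
    rw [DirectSum.decompose_sum] at h1
    rw [DFinsupp.finset_sum_apply] at h1
    rw [AddSubmonoidClass.coe_finset_sum] at h1
    rw [Finset.sum_eq_single k] at h1
    · rwa [DirectSum.decompose_of_mem_same 𝒜
        (hdeg k _ (SetLike.coe_mem _))] at h1
    · intro j _ hjk
      exact DirectSum.decompose_of_mem_ne 𝒜 (hdeg j _ (SetLike.coe_mem _))
        (by omega)
    · intro h; exact absurd hk h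
  · have h2 : (DirectSum.decompose 𝒜 x) k = 0 := DFinsupp.notMem_support_iff.mp hk
    rw [h2]
    simp


end ChernAux

/-- **Closedness of the Chern forms.**  Work in a graded-commutative
differential graded algebra `Ω` over `ℂ` (the smooth complex-valued
differential forms on a manifold `M`, with `𝒜 m` the `m`-forms and `d` the
exterior derivative).  Let `θ` be an `n × n` matrix of `1`-forms,
`Θ = dθ + θ ∧ θ` its curvature, and `c ∈ ℂ`.  Then every homogeneous
component of `det (1 + c • Θ)` is a closed form. -/
theorem chern_forms_closed {n : ℕ} {Ω : Type*} [Ring Ω] [Algebra ℂ Ω]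
    (𝒜 : ℕ → Submodule ℂ Ω) [GradedRing 𝒜]
    (d : Ω →ₗ[ℂ] Ω)
    (hLeib : ∀ (m : ℕ) (a b : Ω), a ∈ 𝒜 m →
      d (a * b) = d a * b + ((-1 : ℤ) ^ m) • (a * d b))
    (hd2 : ∀ a : Ω, d (d a) = 0)
    (hdeg : ∀ (m : ℕ) (a : Ω), a ∈ 𝒜 m → d a ∈ 𝒜 (m + 1))
    (hcomm : ∀ (m k : ℕ) (a b : Ω), a ∈ 𝒜 m → b ∈ 𝒜 k →
      a * b = ((-1 : ℤ) ^ (m * k)) • (b * a))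
    (θ : Matrix (Fin n) (Fin n) Ω)
    (hθ : ∀ i j, θ i j ∈ 𝒜 1)
    (Θ : Matrix (Fin n) (Fin n) Ω)
    (hΘ : Θ = θ.map d + θ * θ)
    (c : ℂ) :
    ∀ k : ℕ,
      d ((DirectSum.decompose 𝒜
        (ndet ((1 : Matrix (Fin n) (Fin n) Ω) + c • Θ)) k : 𝒜 k) : Ω) = 0 := by
  classical
  intro k
  have hone : d 1 = 0 := ChernAux.d_one 𝒜 d hLeib
  set M : Matrix (Fin n) (Fin n) Ω := (1 : Matrix (Fin n) (Fin n) Ω) + c • Θ with hM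
  -- entries of Θ live in degree 2
  have hΘapp : ∀ i j, Θ i j = d (θ i j) + ∑ l, θ i l * θ l j := by
    intro i j
    rw [hΘ, Matrix.add_apply, Matrix.map_apply, Matrix.mul_apply]
  have hΘmem : ∀ i j, Θ i j ∈ 𝒜 2 := by
    intro i j
    rw [hΘapp]
    refine Submodule.add_mem _ (hdeg 1 _ (hθ i j)) (Submodule.sum_mem _ fun l _ => ?_)
    exact SetLike.mul_mem_graded (hθ i l) (hθ l j)
  have hMapp : ∀ i j, M i j = (if i = j then (1:Ω) else 0) + c • Θ i j := by
    intro i j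
    rw [hM, Matrix.add_apply, Matrix.smul_apply, Matrix.one_apply]
  -- entries of M are "even"
  have hMpev : ∀ i j, ChernAux.Pev d (M i j) := by
    intro i j
    rw [hMapp]
    refine ChernAux.Pev.add ?_ (ChernAux.Pev.smul c
      (ChernAux.pev_of_even 𝒜 d hLeib hcomm (by norm_num) (hΘmem i j)))
    split_ifs
    · exact ChernAux.Pev.one hone
    · exact ChernAux.Pev.zero
  have hMcen : ∀ i j, M i j ∈ Subring.center Ω :=
    fun i j => Subring.mem_center_iff.mpr fun g => ((hMpev i j).1 g).symm
  set A : Matrix (Fin n) (Fin n) (Subring.center Ω) :=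
    fun i j => (⟨M i j, hMcen i j⟩ : Subring.center Ω) with hA
  have hcoe : ∀ i j, (A i j : Ω) = M i j := fun i j => rfl
  -- the key differential identity: d M = M θ - θ M entrywise
  have hdΘ : ∀ i j, d (Θ i j) = ∑ q, (d (θ i q) * θ q j - θ i q * d (θ q j)) := by
    intro i j
    rw [hΘapp, map_add, hd2, zero_add, map_sum]
    refine Finset.sum_congr rfl fun q _ => ?_
    rw [hLeib 1 _ _ (hθ i q), pow_one, neg_one_zsmul, ← sub_eq_add_neg]
  have hT : ∀ i j, d ((A i j : Ω)) =
      ∑ q, ((A i q : Ω) * θ q j - θ i q * (A q j : Ω)) := by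
    intro i j
    simp only [hcoe, hMapp]
    -- LHS
    rw [map_add, _root_.map_smul]
    have hite : d (if i = j then (1:Ω) else 0) = 0 := by
      split_ifs
      · exact hone
      · exact map_zero d
    rw [hite, zero_add, hdΘ]
    -- RHS: expand
    have hrhs : ∀ q : Fin n,
        ((if i = q then (1:Ω) else 0) + c • Θ i q) * θ q j
          - θ i q * ((if q = j then (1:Ω) else 0) + c • Θ q j)
        = ((if i = q then θ q j else 0) - (if q = j then θ i q else 0))
          + (c • (Θ i q * θ q j) - c • (θ i q * Θ q j)) := by
      intro q
      rw [add_mul, mul_add, ite_mul, one_mul, zero_mul, mul_ite, mul_one, mul_zero,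
        smul_mul_assoc, mul_smul_comm]
      abel
    simp_rw [hrhs]
    rw [Finset.sum_add_distrib, Finset.sum_sub_distrib]
    rw [Finset.sum_sub_distrib, Finset.sum_ite_eq Finset.univ i (fun q => θ q j),
      Finset.sum_ite_eq' Finset.univ j (fun q => θ i q)]
    simp only [Finset.mem_univ, if_true]
    rw [sub_self, zero_add, Finset.sum_sub_distrib,
      ← Finset.smul_sum, ← Finset.smul_sum, ← smul_sub]
    congr 1
    have e1 : (∑ q, Θ i q * θ q j)
        = (∑ q, d (θ i q) * θ q j) + ∑ q, ∑ l, θ i l * (θ l q * θ q j) := by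
      simp_rw [hΘapp, add_mul]
      rw [Finset.sum_add_distrib]
      congr 1
      refine Finset.sum_congr rfl fun q _ => ?_
      rw [Finset.sum_mul]
      exact Finset.sum_congr rfl fun l _ => mul_assoc _ _ _
    have e2 : (∑ q, θ i q * Θ q j)
        = (∑ q, θ i q * d (θ q j)) + ∑ q, ∑ l, θ i q * (θ q l * θ l j) := by
      simp_rw [hΘapp, mul_add, Finset.mul_sum]
      rw [Finset.sum_add_distrib]
    have e3 : (∑ q, ∑ l, θ i l * (θ l q * θ q j))
        = ∑ q, ∑ l, θ i q * (θ q l * θ l j) := Finset.sum_comm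
    rw [e1, e2, e3]
    abel
  have hdet0 : d ((A.det : Subring.center Ω) : Ω) = 0 :=
    ChernAux.d_det_zero hone A (fun i j => hMpev i j) θ hT
  have hndet : ndet M = (A.det : Ω) := ChernAux.ndet_eq A M fun i j => rfl
  have hx : d (ndet M) = 0 := by rw [hndet]; exact hdet0
  exact ChernAux.d_decompose_zero 𝒜 d hdeg hx k
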